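/- Let A : Ω_A → L(H) be an observable on a finite-dimensional complex Hilbert space and (M, P, J) a minimal Naimark dilation of A, with least disturbing channel Λ_A(ρ) = ∑_{j∈Ω_A} P(j) J ρ J* P(j). Then the support projection of Λ_A is the identity: if R ∈ L(M) is an orthogonal projection with Λ_A*(R) = 1_H, then R = 1_M. -/

import Mathlib

open scoped ComplexOrder

noncomputable section

/-- A positive semidefinite operator on a finite-dimensional complex Hilbert space. -/
def IsPosOp {E : Type*} [NormedAddCommGroup E] [InnerProductSpace ℂ E]
    [FiniteDimensional ℂ E] (T : E →ₗ[ℂ] E) : Prop :=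
  LinearMap.adjoint T = T ∧ ∀ x : E, 0 ≤ (inner ℂ (T x) x : ℂ)

/-- An orthogonal projection: a self-adjoint idempotent operator. -/
def IsOrthoProj {E : Type*} [NormedAddCommGroup E] [InnerProductSpace ℂ E]
    [FiniteDimensional ℂ E] (P : E →ₗ[ℂ] E) : Prop :=
  LinearMap.adjoint P = P ∧ P ∘ₗ P = P

/-- A discrete observable (POVM) with finite outcome set `Ω`. -/
def IsPOVM {E : Type*} [NormedAddCommGroup E] [InnerProductSpace ℂ E]
    [FiniteDimensional ℂ E] {Ω : Type*} [Fintype Ω] (A : Ω → E →ₗ[ℂ] E) : Prop :=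
  (∀ j, IsPosOp (A j)) ∧ ∑ j, A j = (1 : E →ₗ[ℂ] E)

/-- A projection-valued measure (PVM). -/
def IsPVM {E : Type*} [NormedAddCommGroup E] [InnerProductSpace ℂ E]
    [FiniteDimensional ℂ E] {Ω : Type*} [Fintype Ω] (P : Ω → E →ₗ[ℂ] E) : Prop :=
  (∀ j, IsOrthoProj (P j)) ∧ ∑ j, P j = (1 : E →ₗ[ℂ] E)

/-- An isometry between inner product spaces: `J* J = 1`. -/
def IsIsometryOp {E F : Type*} [NormedAddCommGroup E] [InnerProductSpace ℂ E]
    [FiniteDimensional ℂ E] [NormedAddCommGroup F] [InnerProductSpace ℂ F]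
    [FiniteDimensional ℂ F] (J : E →ₗ[ℂ] F) : Prop :=
  LinearMap.adjoint J ∘ₗ J = (1 : E →ₗ[ℂ] E)

/-- `(F, P, J)` is a Naimark dilation of the observable `A`. -/
def IsNaimark {E F : Type*} [NormedAddCommGroup E] [InnerProductSpace ℂ E]
    [FiniteDimensional ℂ E] [NormedAddCommGroup F] [InnerProductSpace ℂ F]
    [FiniteDimensional ℂ F] {Ω : Type*} [Fintype Ω]
    (A : Ω → E →ₗ[ℂ] E) (P : Ω → F →ₗ[ℂ] F) (J : E →ₗ[ℂ] F) : Prop :=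
  IsPVM P ∧ IsIsometryOp J ∧ ∀ j, A j = LinearMap.adjoint J ∘ₗ P j ∘ₗ J

/-- A minimal Naimark dilation: the vectors `P j (J φ)` span the dilation space. -/
def IsMinimalNaimark {E F : Type*} [NormedAddCommGroup E] [InnerProductSpace ℂ E]
    [FiniteDimensional ℂ E] [NormedAddCommGroup F] [InnerProductSpace ℂ F]
    [FiniteDimensional ℂ F] {Ω : Type*} [Fintype Ω]
    (A : Ω → E →ₗ[ℂ] E) (P : Ω → F →ₗ[ℂ] F) (J : E →ₗ[ℂ] F) : Prop :=
  IsNaimark A P J ∧ Submodule.span ℂ {x : F | ∃ j φ, x = P j (J φ)} = ⊤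

/-- The sandwich map `σ ↦ U ∘ σ ∘ V` as a linear map on operators. -/
def sandwich {E F : Type*} [NormedAddCommGroup E] [InnerProductSpace ℂ E]
    [NormedAddCommGroup F] [InnerProductSpace ℂ F]
    (U : E →ₗ[ℂ] F) (V : F →ₗ[ℂ] E) : (E →ₗ[ℂ] E) →ₗ[ℂ] (F →ₗ[ℂ] F) where
  toFun σ := U ∘ₗ σ ∘ₗ V
  map_add' σ τ := by
    ext x; simp [LinearMap.add_comp, LinearMap.comp_add]
  map_smul' c σ := by
    ext x; simp

/-- The least disturbing channel `ρ ↦ ∑ j, P j J ρ J* P j` associated with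
a Naimark dilation `(F, P, J)`. -/
def leastDisturbing {E F : Type*} [NormedAddCommGroup E] [InnerProductSpace ℂ E]
    [FiniteDimensional ℂ E] [NormedAddCommGroup F] [InnerProductSpace ℂ F]
    [FiniteDimensional ℂ F] {Ω : Type*} [Fintype Ω]
    (P : Ω → F →ₗ[ℂ] F) (J : E →ₗ[ℂ] F) : (E →ₗ[ℂ] E) →ₗ[ℂ] (F →ₗ[ℂ] F) :=
  ∑ j, sandwich (P j ∘ₗ J) (LinearMap.adjoint J ∘ₗ P j)

/-- The Lüders channel `σ ↦ ∑ j, P j σ P j` of a PVM `P`. -/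
def ludersChannel {F : Type*} [NormedAddCommGroup F] [InnerProductSpace ℂ F]
    {Ω : Type*} [Fintype Ω] (P : Ω → F →ₗ[ℂ] F) : (F →ₗ[ℂ] F) →ₗ[ℂ] (F →ₗ[ℂ] F) :=
  ∑ j, sandwich (P j) (P j)

/-- Complete positivity of a map on operators, expressed through the existence of
a Kraus decomposition (equivalent to complete positivity in finite dimension). -/
def IsCPMap {E F : Type*} [NormedAddCommGroup E] [InnerProductSpace ℂ E]
    [FiniteDimensional ℂ E] [NormedAddCommGroup F] [InnerProductSpace ℂ F]
    [FiniteDimensional ℂ F] (Λ : (E →ₗ[ℂ] E) →ₗ[ℂ] (F →ₗ[ℂ] F)) : Prop :=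
  ∃ (n : ℕ) (V : Fin n → (E →ₗ[ℂ] F)),
    ∀ ρ, Λ ρ = ∑ i, V i ∘ₗ ρ ∘ₗ LinearMap.adjoint (V i)

/-- A quantum channel: a completely positive trace-preserving linear map. -/
def IsChannel {E F : Type*} [NormedAddCommGroup E] [InnerProductSpace ℂ E]
    [FiniteDimensional ℂ E] [NormedAddCommGroup F] [InnerProductSpace ℂ F]
    [FiniteDimensional ℂ F] (Λ : (E →ₗ[ℂ] E) →ₗ[ℂ] (F →ₗ[ℂ] F)) : Prop :=
  IsCPMap Λ ∧ ∀ ρ, LinearMap.trace ℂ F (Λ ρ) = LinearMap.trace ℂ E ρ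

/-- `Λd` is the Heisenberg dual of `Λ`: `tr[Λ(ρ) B] = tr[ρ Λd(B)]` for all `ρ, B`. -/
def IsHeisenbergDual {E F : Type*} [NormedAddCommGroup E] [InnerProductSpace ℂ E]
    [FiniteDimensional ℂ E] [NormedAddCommGroup F] [InnerProductSpace ℂ F]
    [FiniteDimensional ℂ F] (Λ : (E →ₗ[ℂ] E) →ₗ[ℂ] (F →ₗ[ℂ] F))
    (Λd : (F →ₗ[ℂ] F) →ₗ[ℂ] (E →ₗ[ℂ] E)) : Prop :=
  ∀ ρ B, LinearMap.trace ℂ F (Λ ρ ∘ₗ B) = LinearMap.trace ℂ E (ρ ∘ₗ Λd B)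

/-- Channel post-processing: `Λ₀ ⪯ Λ` iff `Λ₀ = Γ ∘ Λ` for some channel `Γ`. -/
def ChanPP {E F G : Type*} [NormedAddCommGroup E] [InnerProductSpace ℂ E]
    [FiniteDimensional ℂ E] [NormedAddCommGroup F] [InnerProductSpace ℂ F]
    [FiniteDimensional ℂ F] [NormedAddCommGroup G] [InnerProductSpace ℂ G]
    [FiniteDimensional ℂ G]
    (Λ₀ : (E →ₗ[ℂ] E) →ₗ[ℂ] (G →ₗ[ℂ] G)) (Λ : (E →ₗ[ℂ] E) →ₗ[ℂ] (F →ₗ[ℂ] F)) : Prop :=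
  ∃ Γ : (F →ₗ[ℂ] F) →ₗ[ℂ] (G →ₗ[ℂ] G), IsChannel Γ ∧ Λ₀ = Γ ∘ₗ Λ

/-- Post-processing equivalence of channels. -/
def ChanEquiv {E F G : Type*} [NormedAddCommGroup E] [InnerProductSpace ℂ E]
    [FiniteDimensional ℂ E] [NormedAddCommGroup F] [InnerProductSpace ℂ F]
    [FiniteDimensional ℂ F] [NormedAddCommGroup G] [InnerProductSpace ℂ G]
    [FiniteDimensional ℂ G]
    (Λ₀ : (E →ₗ[ℂ] E) →ₗ[ℂ] (G →ₗ[ℂ] G)) (Λ : (E →ₗ[ℂ] E) →ₗ[ℂ] (F →ₗ[ℂ] F)) : Prop :=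
  ChanPP Λ₀ Λ ∧ ChanPP Λ Λ₀

/-- Observable post-processing: `B ⪯ A` via a stochastic matrix `p`. -/
def ObsPP {E : Type*} [NormedAddCommGroup E] [InnerProductSpace ℂ E]
    [FiniteDimensional ℂ E] {Ω₁ Ω₂ : Type*} [Fintype Ω₁] [Fintype Ω₂]
    (B : Ω₂ → E →ₗ[ℂ] E) (A : Ω₁ → E →ₗ[ℂ] E) : Prop :=
  ∃ p : Ω₂ → Ω₁ → ℝ, (∀ k j, 0 ≤ p k j) ∧ (∀ j, ∑ k, p k j = 1) ∧
    ∀ k, B k = ∑ j, (p k j : ℂ) • A j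

/-- Post-processing equivalence of observables. -/
def ObsEquiv {E : Type*} [NormedAddCommGroup E] [InnerProductSpace ℂ E]
    [FiniteDimensional ℂ E] {Ω₁ Ω₂ : Type*} [Fintype Ω₁] [Fintype Ω₂]
    (B : Ω₂ → E →ₗ[ℂ] E) (A : Ω₁ → E →ₗ[ℂ] E) : Prop :=
  ObsPP B A ∧ ObsPP A B

/-- `B` is a relabeling of `A` (along some function `f` on outcomes). -/
def IsRelabeling {E : Type*} [NormedAddCommGroup E] [InnerProductSpace ℂ E]
    [FiniteDimensional ℂ E] {Ω₁ Ω₂ : Type*} [Fintype Ω₁] [Fintype Ω₂] [DecidableEq Ω₂]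
    (B : Ω₂ → E →ₗ[ℂ] E) (A : Ω₁ → E →ₗ[ℂ] E) : Prop :=
  ∃ f : Ω₁ → Ω₂, ∀ k, B k = ∑ j ∈ Finset.univ.filter (fun j => f j = k), A j

/-- A minimally sufficient observable: every observable post-processing
equivalent to it is a refinement of it (i.e. it is a relabeling of every such observable). -/
def MinSufficient {E : Type*} [NormedAddCommGroup E] [InnerProductSpace ℂ E]
    [FiniteDimensional ℂ E] {Ω : Type*} [Fintype Ω] [DecidableEq Ω]
    (A : Ω → E →ₗ[ℂ] E) : Prop :=
  ∀ (Ω' : Type) (_ : Fintype Ω') (B : Ω' → E →ₗ[ℂ] E),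
    IsPOVM B → ObsEquiv B A → IsRelabeling A B

/-- Compatibility of an observable `A` and a channel `Λ`: there is an instrument
with the outcome statistics of `A` whose total channel is `Λ`. -/
def CompatObsChan {E F : Type*} [NormedAddCommGroup E] [InnerProductSpace ℂ E]
    [FiniteDimensional ℂ E] [NormedAddCommGroup F] [InnerProductSpace ℂ F]
    [FiniteDimensional ℂ F] {Ω : Type*} [Fintype Ω]
    (A : Ω → E →ₗ[ℂ] E) (Λ : (E →ₗ[ℂ] E) →ₗ[ℂ] (F →ₗ[ℂ] F)) : Prop :=
  ∃ I : Ω → ((E →ₗ[ℂ] E) →ₗ[ℂ] (F →ₗ[ℂ] F)),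
    (∀ j, IsCPMap (I j)) ∧
    (∀ j ρ, LinearMap.trace ℂ F (I j ρ) = LinearMap.trace ℂ E (ρ ∘ₗ A j)) ∧
    ∑ j, I j = Λ

/-- Joint measurability (compatibility) of two observables. -/
def JointlyMeasurable {E : Type*} [NormedAddCommGroup E] [InnerProductSpace ℂ E]
    [FiniteDimensional ℂ E] {Ω₁ Ω₂ : Type*} [Fintype Ω₁] [Fintype Ω₂]
    (A : Ω₁ → E →ₗ[ℂ] E) (B : Ω₂ → E →ₗ[ℂ] E) : Prop :=
  ∃ G : Ω₁ × Ω₂ → E →ₗ[ℂ] E, IsPOVM G ∧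
    (∀ j, A j = ∑ k, G (j, k)) ∧ (∀ k, B k = ∑ j, G (j, k))

/-- An extreme observable: an extreme point of the convex set of observables
with the given outcome set. -/
def IsExtremeObs {E : Type*} [NormedAddCommGroup E] [InnerProductSpace ℂ E]
    [FiniteDimensional ℂ E] {Ω : Type*} [Fintype Ω] (A : Ω → E →ₗ[ℂ] E) : Prop :=
  IsPOVM A ∧ ∀ (B₁ B₂ : Ω → E →ₗ[ℂ] E) (t : ℝ), IsPOVM B₁ → IsPOVM B₂ →
    0 < t → t < 1 → (∀ j, A j = (t : ℂ) • B₁ j + ((1 - t : ℝ) : ℂ) • B₂ j) →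
    (B₁ = A ∧ B₂ = A)

/-- `|x⟩⟨y|` : the rank-one operator `z ↦ ⟨y, z⟩ x`. -/
def outer {E : Type*} [NormedAddCommGroup E] [InnerProductSpace ℂ E] (x y : E) :
    E →ₗ[ℂ] E where
  toFun z := (inner ℂ y z : ℂ) • x
  map_add' z w := by simp [inner_add_right, add_smul]
  map_smul' c z := by simp [inner_smul_right, smul_smul]

/-- Loewner order on operators: `S ≤ T` iff `T - S` is positive semidefinite. -/
def LoewnerLE {E : Type*} [NormedAddCommGroup E] [InnerProductSpace ℂ E]
    [FiniteDimensional ℂ E] (S T : E →ₗ[ℂ] E) : Prop :=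
  IsPosOp (T - S)

/-- Compression of an operator `T` on `F` to a subspace `S`: `P_S ∘ T ∘ incl_S`. -/
def compressTo {F : Type*} [NormedAddCommGroup F] [InnerProductSpace ℂ F]
    [FiniteDimensional ℂ F] (S : Submodule ℂ F) (T : F →ₗ[ℂ] F) : ↥S →ₗ[ℂ] ↥S :=
  have := FiniteDimensional.complete ℂ ↥S
  S.orthogonalProjectionOnto.toLinearMap ∘ₗ T ∘ₗ S.subtype

end

noncomputable section Aux

variable {E F : Type*} [NormedAddCommGroup E] [InnerProductSpace ℂ E]
  [NormedAddCommGroup F] [InnerProductSpace ℂ F]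

lemma trace_outer [FiniteDimensional ℂ E] (x y : E) :
    LinearMap.trace ℂ E (outer x y) = (inner ℂ y x : ℂ) := by
  let b := stdOrthonormalBasis ℂ E
  rw [LinearMap.trace_eq_matrix_trace ℂ b.toBasis, Matrix.trace]
  have : ∀ i, (LinearMap.toMatrix b.toBasis b.toBasis (outer x y)).diag i
      = (inner ℂ y (b i) : ℂ) * inner ℂ (b i) x := by
    intro i
    simp [Matrix.diag, LinearMap.toMatrix_apply, outer, b.coe_toBasis,
      b.coe_toBasis_repr_apply, b.repr_apply_apply, inner_smul_right]
  simp_rw [this]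
  exact b.sum_inner_mul_inner y x

lemma term_outer [FiniteDimensional ℂ E] [FiniteDimensional ℂ F]
    (x y : E) (U : E →ₗ[ℂ] F) (V : F →ₗ[ℂ] E) (R : F →ₗ[ℂ] F) :
    (U ∘ₗ (outer x y ∘ₗ V)) ∘ₗ R = outer (U x) (LinearMap.adjoint (V ∘ₗ R) y) := by
  ext z
  simp [outer, LinearMap.adjoint_inner_left]

lemma sumComp' {ι : Type*} [Fintype ι] [FiniteDimensional ℂ E] [FiniteDimensional ℂ F]
    (f : ι → E →ₗ[ℂ] F) (g : E →ₗ[ℂ] E) : (∑ i, f i) ∘ₗ g = ∑ i, f i ∘ₗ g := by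
  ext x; simp

lemma innerSelfC {E : Type*} [NormedAddCommGroup E] [InnerProductSpace ℂ E] (y : E) :
    (inner ℂ y y : ℂ) = ((‖y‖ ^ 2 : ℝ) : ℂ) := by
  rw [inner_self_eq_norm_sq_to_K]
  norm_cast

end Aux

set_option maxHeartbeats 1000000 in
/-- The support projection of the least disturbing channel obtained from a
minimal Naimark dilation is the identity: if `R` is an orthogonal projection with
`Λ_A*(R) = 1`, then `R = 1`. -/
theorem stmt_5 {H M : Type*}
    [NormedAddCommGroup H] [InnerProductSpace ℂ H] [FiniteDimensional ℂ H]
    [NormedAddCommGroup M] [InnerProductSpace ℂ M] [FiniteDimensional ℂ M]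
    {Ω : Type*} [Fintype Ω]
    (A : Ω → H →ₗ[ℂ] H) (P : Ω → M →ₗ[ℂ] M) (J : H →ₗ[ℂ] M)
    (hA : IsPOVM A) (hdil : IsMinimalNaimark A P J)
    (Λd : (M →ₗ[ℂ] M) →ₗ[ℂ] (H →ₗ[ℂ] H))
    (hΛd : IsHeisenbergDual (leastDisturbing P J) Λd)
    (R : M →ₗ[ℂ] M) (hR : IsOrthoProj R) (h1 : Λd R = (1 : H →ₗ[ℂ] H)) :
    R = (1 : M →ₗ[ℂ] M) := by
  obtain ⟨⟨⟨hPproj, hPsum⟩, hIso, _⟩, hspan⟩ := hdil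
  obtain ⟨hRadj, hRidem⟩ := hR
  have hsa : ∀ u v : M, (inner ℂ u (R v) : ℂ) = inner ℂ (R u) v := by
    intro u v
    rw [← LinearMap.adjoint_inner_left, hRadj]
  have hsaP : ∀ (k : Ω) (u v : M), (inner ℂ u (P k v) : ℂ) = inner ℂ (P k u) v := by
    intro k u v
    rw [← LinearMap.adjoint_inner_left, (hPproj k).1]
  have hPid : ∀ (k : Ω) (u : M), P k (P k u) = P k u := fun k u =>
    LinearMap.congr_fun (hPproj k).2 u
  have hRid : ∀ u : M, R (R u) = R u := fun u => LinearMap.congr_fun hRidem u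
  -- Key step: R fixes each P j (J φ)
  have key : ∀ (φ : H) (j : Ω), R (P j (J φ)) = P j (J φ) := by
    intro φ j
    -- Fact 1 : ∑ j ⟪R (P j (J φ)), P j (J φ)⟫ = ⟪φ, φ⟫
    have fact1 : ∑ k, (inner ℂ (R (P k (J φ))) (P k (J φ)) : ℂ) = (inner ℂ φ φ : ℂ) := by
      have hdual := hΛd (outer φ φ) R
      rw [h1] at hdual
      simp only [Module.End.one_eq_id, LinearMap.comp_id] at hdual
      rw [trace_outer] at hdual
      rw [← hdual]
      have hexp : leastDisturbing P J (outer φ φ) ∘ₗ R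
          = ∑ k, outer (P k (J φ)) (R (P k (J φ))) := by
        have e1 : leastDisturbing P J (outer φ φ)
            = ∑ k, (P k ∘ₗ J) ∘ₗ (outer φ φ ∘ₗ (LinearMap.adjoint J ∘ₗ P k)) := by
          simp only [leastDisturbing, LinearMap.sum_apply]
          exact Finset.sum_congr rfl fun k _ => by
            show (P k ∘ₗ J) ∘ₗ outer φ φ ∘ₗ (LinearMap.adjoint J ∘ₗ P k) = _
            rfl
        rw [e1, sumComp']
        refine Finset.sum_congr rfl fun k _ => ?_
        rw [term_outer]
        congr 1
        simp only [LinearMap.adjoint_comp, LinearMap.adjoint_adjoint,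
          hRadj, (hPproj k).1]
        simp
      rw [hexp, map_sum]
      exact Finset.sum_congr rfl fun k _ => (trace_outer _ _).symm
    -- Fact 2 : ∑ j ⟪P j (J φ), P j (J φ)⟫ = ⟪φ, φ⟫
    have fact2 : ∑ k, (inner ℂ (P k (J φ)) (P k (J φ)) : ℂ) = (inner ℂ φ φ : ℂ) := by
      have hJ : (inner ℂ (J φ) (J φ) : ℂ) = inner ℂ φ φ := by
        rw [← LinearMap.adjoint_inner_left]
        have : LinearMap.adjoint J (J φ) = φ := by
          simpa using LinearMap.congr_fun hIso φ
        rw [this]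
      have hsum : (J φ : M) = ∑ k, P k (J φ) := by
        have := LinearMap.congr_fun hPsum (J φ)
        simpa [LinearMap.sum_apply] using this.symm
      calc ∑ k, (inner ℂ (P k (J φ)) (P k (J φ)) : ℂ)
          = ∑ k, (inner ℂ (J φ) (P k (J φ)) : ℂ) := by
            refine Finset.sum_congr rfl fun k _ => ?_
            have := hsaP k (J φ) (P k (J φ))
            rw [hPid] at this
            exact this.symm
        _ = inner ℂ (J φ) (∑ k, P k (J φ)) := by rw [inner_sum]
        _ = inner ℂ (J φ) (J φ) := by rw [← hsum]
        _ = inner ℂ φ φ := hJ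
    -- each difference vanishes
    have hdiff : ∑ k, (inner ℂ (P k (J φ) - R (P k (J φ)))
        (P k (J φ) - R (P k (J φ))) : ℂ) = 0 := by
      have hz : ∀ k, (inner ℂ (P k (J φ) - R (P k (J φ))) (R (P k (J φ))) : ℂ) = 0 := by
        intro k
        rw [hsa]
        have : R (P k (J φ) - R (P k (J φ))) = 0 := by
          rw [map_sub, hRid, sub_self]
        rw [this, inner_zero_left]
      have heach : ∀ k, (inner ℂ (P k (J φ) - R (P k (J φ)))
          (P k (J φ) - R (P k (J φ))) : ℂ)
          = inner ℂ (P k (J φ)) (P k (J φ)) - inner ℂ (R (P k (J φ))) (P k (J φ)) := by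
        intro k
        rw [inner_sub_right, hz, sub_zero, inner_sub_left]
      simp_rw [heach]
      rw [Finset.sum_sub_distrib, fact1, fact2, sub_self]
    have hnorm : ∑ k, ‖P k (J φ) - R (P k (J φ))‖ ^ 2 = 0 := by
      simp_rw [innerSelfC] at hdiff
      have h2 : ((∑ k, ‖P k (J φ) - R (P k (J φ))‖ ^ 2 : ℝ) : ℂ) = 0 := by
        push_cast
        push_cast at hdiff
        exact hdiff
      exact_mod_cast h2
    have hzero : ‖P j (J φ) - R (P j (J φ))‖ ^ 2 = 0 :=
      (Finset.sum_eq_zero_iff_of_nonneg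
        (fun k _ => by positivity)).mp hnorm j (Finset.mem_univ j)
    have hd0 : P j (J φ) - R (P j (J φ)) = 0 := by
      have := pow_eq_zero_iff (n := 2) (by norm_num) |>.mp hzero
      exact norm_eq_zero.mp this
    exact (sub_eq_zero.mp hd0).symm
  -- conclude R = 1 on the spanning set
  ext m
  have hm : m ∈ Submodule.span ℂ {x : M | ∃ j φ, x = P j (J φ)} := by
    rw [hspan]; trivial
  simp only [Module.End.one_apply]
  refine Submodule.span_induction ?_ ?_ ?_ ?_ hm
  · rintro y ⟨j, φ, rfl⟩; exact key φ j
  · simp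
  · intro y z _ _ hy hz; rw [map_add, hy, hz]
  · intro c y _ hy; rw [map_smul, hy]
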